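/- Let B_0,…,B_d be d+1 orthonormal bases of ℂ^d, with B_a = {e^a_0,…,e^a_{d−1}}, that are pairwise mutually unbiased: |⟨e^a_j, e^b_k⟩|² = 1/d for all a ≠ b and all j, k. Then with uniform weights w_a = 1/(d(d+1)) their union forms a weighted 2-design: ∑_{a,b=0}^{d} w_a w_b ∑_{j,k=0}^{d−1} |⟨e^a_j, e^b_k⟩|^4 = 2/(d(d+1)). -/

import Mathlib

/-- A complete set of `d+1` mutually unbiased bases of `ℂ^d`, with uniform weights
`1/(d(d+1))`, forms a weighted 2-design (Welch-bound characterization). -/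
theorem mub_complete_set_is_two_design (d : ℕ) (hd : 0 < d)
    (e : Fin (d + 1) → Fin d → EuclideanSpace ℂ (Fin d)) (he : ∀ a, Orthonormal ℂ (e a))
    (hmub : ∀ a b, a ≠ b → ∀ j k, ‖(inner ℂ (e a j) (e b k) : ℂ)‖ ^ 2 = (d : ℝ)⁻¹) :
    ∑ a : Fin (d + 1), ∑ b : Fin (d + 1),
        ((d : ℝ) * (d + 1))⁻¹ * ((d : ℝ) * (d + 1))⁻¹ *
          ∑ j : Fin d, ∑ k : Fin d, ‖(inner ℂ (e a j) (e b k) : ℂ)‖ ^ 4 =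
      2 / (d * (d + 1)) := by
  have hd0 : (d : ℝ) ≠ 0 := Nat.cast_ne_zero.mpr hd.ne'
  have key : ∀ a b, (∑ j : Fin d, ∑ k : Fin d, ‖(inner ℂ (e a j) (e b k) : ℂ)‖ ^ 4)
      = if a = b then (d : ℝ) else 1 := by
    intro a b
    by_cases hab : a = b
    · subst hab
      have horth := (orthonormal_iff_ite.mp (he a))
      rw [if_pos rfl]
      have h4 : ∀ j k : Fin d, ‖(inner ℂ (e a j) (e a k) : ℂ)‖ ^ 4
          = if j = k then (1 : ℝ) else 0 := by
        intro j k
        rw [horth j k]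
        by_cases h : j = k <;> simp [h]
      rw [Finset.sum_congr rfl fun j _ => Finset.sum_congr rfl fun k _ => h4 j k]
      simp [Finset.sum_ite_eq]
    · simp only [hab, if_false]
      have : ∀ j k : Fin d, ‖(inner ℂ (e a j) (e b k) : ℂ)‖ ^ 4 = ((d : ℝ)⁻¹) ^ 2 := by
        intro j k
        have := hmub a b hab j k
        calc ‖(inner ℂ (e a j) (e b k) : ℂ)‖ ^ 4 = (‖(inner ℂ (e a j) (e b k) : ℂ)‖ ^ 2) ^ 2 := by
              ring
          _ = ((d : ℝ)⁻¹) ^ 2 := by rw [this]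
      rw [Finset.sum_congr rfl fun j _ => Finset.sum_congr rfl fun k _ => this j k]
      simp [Finset.sum_const]
      field_simp
  have hinner : ∀ a : Fin (d + 1),
      (∑ b : Fin (d + 1), (if a = b then (d : ℝ) else 1)) = 2 * d := by
    intro a
    have : ∀ b : Fin (d + 1), (if a = b then (d : ℝ) else 1)
        = (if a = b then (d : ℝ) - 1 else 0) + 1 := by
      intro b; by_cases h : a = b <;> simp [h]
    rw [Finset.sum_congr rfl fun b _ => this b, Finset.sum_add_distrib,
      Finset.sum_ite_eq Finset.univ a fun _ => (d : ℝ) - 1]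
    simp
    ring
  calc ∑ a : Fin (d + 1), ∑ b : Fin (d + 1),
        ((d : ℝ) * (d + 1))⁻¹ * ((d : ℝ) * (d + 1))⁻¹ *
          ∑ j : Fin d, ∑ k : Fin d, ‖(inner ℂ (e a j) (e b k) : ℂ)‖ ^ 4
      = ∑ a : Fin (d + 1), ∑ b : Fin (d + 1),
        ((d : ℝ) * (d + 1))⁻¹ * ((d : ℝ) * (d + 1))⁻¹ * (if a = b then (d : ℝ) else 1) := by
        refine Finset.sum_congr rfl fun a _ => Finset.sum_congr rfl fun b _ => ?_
        rw [key]
    _ = ∑ a : Fin (d + 1),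
        ((d : ℝ) * (d + 1))⁻¹ * ((d : ℝ) * (d + 1))⁻¹ * (2 * d) := by
        refine Finset.sum_congr rfl fun a _ => ?_
        rw [← Finset.mul_sum, hinner]
    _ = (d + 1) * (((d : ℝ) * (d + 1))⁻¹ * ((d : ℝ) * (d + 1))⁻¹ * (2 * d)) := by
        simp [Finset.sum_const]
    _ = 2 / (d * (d + 1)) := by
        have h1 : (d : ℝ) + 1 ≠ 0 := by positivity
        field_simp
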